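/- Let T be a critical binary Bienaymé–Galton–Watson tree whose internal nodes carry i.i.d. signs, ⊕ with probability p and ⊖ with probability 1-p, independent of the tree. Let q(k) = P(LIS(T) = k), where LIS(T) is the maximal number of leaves of a positive subtree of T. Then for all k ≥ 2, q(k) = (1-p)·q(k)·∑_{i=1}^{k-1} q(i) + p·∑_{1 ≤ i < k/2} q(i)·q(k-i) + ((1-p)/2)·q(k)^2 + 1_{k even}·(p/2)·q(k/2)^2. -/

import Mathlib

/-- Sign-decorated plane binary trees: leaves, and internal nodes carrying a sign
(`true` = ⊕, `false` = ⊖) together with two ordered subtrees. -/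
inductive STree : Type
  | leaf : STree
  | node : Bool → STree → STree → STree

namespace STree

/-- `LIS t` is the maximal number of leaves of a positive subtree of `t`
(a subtree all of whose internal nodes carry ⊕): if the root carries ⊕ the LIS values of
the two subtrees add, if it carries ⊖ one takes the maximum. -/
def LIS : STree → ℕ
  | leaf => 1
  | node true l r => LIS l + LIS r
  | node false l r => max (LIS l) (LIS r)

/-- The probability that the `p`-signed critical binary Bienaymé–Galton–Watson tree
(each vertex independently has 0 or 2 children with probability 1/2 each, and each
internal node independently carries ⊕ with probability `p` and ⊖ with probability `1-p`)
equals a given finite sign-decorated tree. -/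
noncomputable def weight (p : ℝ) : STree → ℝ
  | leaf => 1 / 2
  | node s l r => (1 / 2) * (if s then p else 1 - p) * weight p l * weight p r

end STree

/-- `q p k = P(LIS(T) = k)` for the `p`-signed critical binary
Bienaymé–Galton–Watson tree `T`. -/
noncomputable def qLIS (p : ℝ) (k : ℕ) : ℝ :=
  ∑' t : {t : STree // t.LIS = k}, STree.weight p t.1

namespace QAux

open STree

lemma one_le_LIS (t : STree) : 1 ≤ t.LIS := by
  induction t with
  | leaf => simp [LIS]
  | node s l r ihl ihr => cases s <;> simp [LIS] <;> omega

variable {p : ℝ}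

lemma weight_nonneg (hp0 : 0 ≤ p) (hp1 : p ≤ 1) : ∀ t : STree, 0 ≤ t.weight p := by
  intro t
  induction t with
  | leaf => norm_num [weight]
  | node s l r ihl ihr =>
    have : (0:ℝ) ≤ if s then p else 1 - p := by cases s <;> simp <;> linarith
    simp only [weight]
    positivity

def ht : STree → ℕ
  | .leaf => 0
  | .node _ l r => max (ht l) (ht r) + 1

lemma sum_weight_le (hp0 : 0 ≤ p) (hp1 : p ≤ 1) :
    ∀ n : ℕ, ∀ F : Finset STree, (∀ t ∈ F, ht t ≤ n) → ∑ t ∈ F, t.weight p ≤ 1 := by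
  intro n
  induction n with
  | zero =>
    intro F hF
    have hsub : F ⊆ {STree.leaf} := by
      intro t ht'
      have := hF t ht'
      cases t with
      | leaf => simp
      | node s l r => simp [ht] at this
    calc ∑ t ∈ F, t.weight p ≤ ∑ t ∈ ({STree.leaf} : Finset STree), t.weight p :=
          Finset.sum_le_sum_of_subset_of_nonneg hsub (fun t _ _ => weight_nonneg hp0 hp1 t)
      _ = 1/2 := by simp [weight]
      _ ≤ 1 := by norm_num
  | succ n ih =>
    intro F hF
    classical
    set F₁ := F.filter (fun t => t = STree.leaf) with hF₁
    set F₂ := F.filter (fun t => t ≠ STree.leaf) with hF₂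
    have hsplit : ∑ t ∈ F, t.weight p = ∑ t ∈ F₁, t.weight p + ∑ t ∈ F₂, t.weight p := by
      rw [hF₁, hF₂, Finset.sum_filter_add_sum_filter_not]
    have h1 : ∑ t ∈ F₁, t.weight p ≤ 1/2 := by
      have hsub : F₁ ⊆ {STree.leaf} := by
        intro t ht'; simp [hF₁] at ht'; simp [ht'.2]
      calc ∑ t ∈ F₁, t.weight p ≤ ∑ t ∈ ({STree.leaf} : Finset STree), t.weight p :=
            Finset.sum_le_sum_of_subset_of_nonneg hsub (fun t _ _ => weight_nonneg hp0 hp1 t)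
        _ = 1/2 := by simp [weight]
    -- decomposition map
    set g : STree → Bool × STree × STree := fun t =>
      match t with
      | .leaf => (true, .leaf, .leaf)
      | .node s l r => (s, l, r) with hg
    have hginj : Set.InjOn g F₂ := by
      intro a ha b hb hab
      simp [hF₂] at ha hb
      cases a with
      | leaf => exact absurd rfl ha.2
      | node s l r => cases b with
        | leaf => exact absurd rfl hb.2
        | node s' l' r' => simp [hg] at hab; simp [hab.1, hab.2.1, hab.2.2]
    set P := F₂.image (fun t => (g t).2.1) with hP
    set Q := F₂.image (fun t => (g t).2.2) with hQ
    have hPht : ∀ t ∈ P, ht t ≤ n := by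
      intro t htP
      obtain ⟨a, haF₂, rfl⟩ := Finset.mem_image.mp htP
      obtain ⟨haF, hane⟩ := Finset.mem_filter.mp haF₂
      cases a with
      | leaf => exact absurd rfl hane
      | node s l r =>
        have := hF _ haF; simp [ht, hg] at this ⊢; omega
    have hQht : ∀ t ∈ Q, ht t ≤ n := by
      intro t htQ
      obtain ⟨a, haF₂, rfl⟩ := Finset.mem_image.mp htQ
      obtain ⟨haF, hane⟩ := Finset.mem_filter.mp haF₂
      cases a with
      | leaf => exact absurd rfl hane
      | node s l r =>
        have := hF _ haF; simp [ht, hg] at this ⊢; omega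
    set wn : Bool × STree × STree → ℝ := fun x =>
      (1/2) * (if x.1 then p else 1 - p) * x.2.1.weight p * x.2.2.weight p with hwn
    have hwn_nonneg : ∀ x, 0 ≤ wn x := by
      rintro ⟨b, l, r⟩
      have h2 : (0:ℝ) ≤ (1/2) * (if b = true then p else 1 - p) := by
        cases b <;> simp <;> linarith
      exact mul_nonneg (mul_nonneg h2 (weight_nonneg hp0 hp1 l)) (weight_nonneg hp0 hp1 r)
    have h2 : ∑ t ∈ F₂, t.weight p ≤ 1/2 := by
      have heq : ∑ t ∈ F₂, t.weight p = ∑ x ∈ F₂.image g, wn x := by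
        rw [Finset.sum_image (fun a ha b hb => hginj ha hb)]
        apply Finset.sum_congr rfl
        intro t htF
        simp [hF₂] at htF
        cases t with
        | leaf => exact absurd rfl htF.2
        | node s l r => simp [hg, hwn, weight]
      have hsub : F₂.image g ⊆ (Finset.univ : Finset Bool) ×ˢ P ×ˢ Q := by
        intro x hx
        simp [hP, hQ] at hx ⊢
        obtain ⟨a, haF, rfl⟩ := hx
        exact ⟨⟨a, haF, rfl⟩, ⟨a, haF, rfl⟩⟩
      have hle : ∑ x ∈ F₂.image g, wn x ≤ ∑ x ∈ (Finset.univ : Finset Bool) ×ˢ P ×ˢ Q, wn x :=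
        Finset.sum_le_sum_of_subset_of_nonneg hsub (fun x _ _ => hwn_nonneg x)
      have hprod : ∑ x ∈ (Finset.univ : Finset Bool) ×ˢ P ×ˢ Q, wn x
          = (1/2) * ((∑ b ∈ (Finset.univ : Finset Bool), (if b then p else 1 - p))
              * ((∑ l ∈ P, l.weight p) * (∑ r ∈ Q, r.weight p))) := by
        have step : ∑ x ∈ (Finset.univ : Finset Bool) ×ˢ P ×ˢ Q, wn x
            = ∑ b ∈ (Finset.univ : Finset Bool), ∑ l ∈ P, ∑ r ∈ Q, wn (b, l, r) := by
          rw [Finset.sum_product]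
          exact Finset.sum_congr rfl fun b _ => Finset.sum_product _ _ _
        rw [step]
        have hb : ∀ b : Bool, ∑ l ∈ P, ∑ r ∈ Q, wn (b, l, r)
            = (1/2) * ((if b = true then p else 1 - p)
                * ((∑ l ∈ P, l.weight p) * (∑ r ∈ Q, r.weight p))) := by
          intro b
          rw [Finset.sum_mul_sum]
          simp only [Finset.mul_sum]
          exact Finset.sum_congr rfl fun l _ => Finset.sum_congr rfl fun r _ => by
            simp only [hwn]; ring
        conv_rhs => rw [Finset.sum_mul, Finset.mul_sum]
        exact Finset.sum_congr rfl fun b _ => hb b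
      have hbool : ∑ b ∈ (Finset.univ : Finset Bool), (if b then p else 1 - p) = 1 := by
        rw [Fintype.sum_bool]; norm_num
      have hPle := ih P hPht
      have hQle := ih Q hQht
      have hPpos : 0 ≤ ∑ l ∈ P, l.weight p :=
        Finset.sum_nonneg (fun t _ => weight_nonneg hp0 hp1 t)
      have hQpos : 0 ≤ ∑ r ∈ Q, r.weight p :=
        Finset.sum_nonneg (fun t _ => weight_nonneg hp0 hp1 t)
      calc ∑ t ∈ F₂, t.weight p = ∑ x ∈ F₂.image g, wn x := heq
        _ ≤ ∑ x ∈ (Finset.univ : Finset Bool) ×ˢ P ×ˢ Q, wn x := hle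
        _ = (1/2) * (1 * ((∑ l ∈ P, l.weight p) * (∑ r ∈ Q, r.weight p))) := by
            rw [hprod, hbool]
        _ ≤ 1/2 := by nlinarith
    linarith [hsplit, h1, h2]

lemma summable_weight (hp0 : 0 ≤ p) (hp1 : p ≤ 1) : Summable (STree.weight p) := by
  apply summable_of_sum_le (fun t => weight_nonneg hp0 hp1 t)
  intro u
  exact sum_weight_le hp0 hp1 (u.sup ht) u (fun t htu => Finset.le_sup htu)



lemma qLIS_eq_tsum_ite (j : ℕ) :
    qLIS p j = ∑' t : STree, if t.LIS = j then t.weight p else 0 := by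
  classical
  have : qLIS p j = ∑' t : ({t : STree | t.LIS = j} : Set STree), STree.weight p t.1 := rfl
  rw [this, tsum_subtype]
  exact tsum_congr fun t => by
    by_cases h : t.LIS = j <;> simp [Set.indicator_apply, h]

lemma qLIS_zero : qLIS p 0 = 0 := by
  have : IsEmpty {t : STree // t.LIS = 0} :=
    ⟨fun ⟨t, ht⟩ => by have := one_le_LIS t; omega⟩
  exact tsum_empty

lemma summable_ite (hp0 : 0 ≤ p) (hp1 : p ≤ 1) (P : STree → Prop) [DecidablePred P] :
    Summable (fun t : STree => if P t then t.weight p else 0) := by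
  apply Summable.of_nonneg_of_le (fun t => ?_) (fun t => ?_) (summable_weight hp0 hp1)
  · split
    · exact weight_nonneg hp0 hp1 t
    · exact le_rfl
  · split
    · exact le_rfl
    · exact weight_nonneg hp0 hp1 t

lemma key (hp0 : 0 ≤ p) (hp1 : p ≤ 1) (h : ℕ → ℝ) (S : Finset ℕ) (hS : ∀ i ∉ S, h i = 0) :
    Summable (fun t : STree => h t.LIS * t.weight p) ∧
    ∑' t : STree, h t.LIS * t.weight p = ∑ i ∈ S, h i * qLIS p i := by
  classical
  have hpt : ∀ t : STree, h t.LIS * t.weight p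
      = ∑ i ∈ S, h i * (if t.LIS = i then t.weight p else 0) := by
    intro t
    by_cases hm : t.LIS ∈ S
    · rw [Finset.sum_eq_single t.LIS]
      · simp
      · intro i hi hne
        rw [if_neg (fun hh => hne hh.symm), mul_zero]
      · intro hnot; exact absurd hm hnot
    · rw [hS _ hm, zero_mul]
      symm; apply Finset.sum_eq_zero
      intro i hi
      have hne : t.LIS ≠ i := fun hh => hm (hh ▸ hi)
      rw [if_neg hne, mul_zero]
  have hsummand : ∀ i : ℕ,
      Summable (fun t : STree => h i * (if t.LIS = i then t.weight p else 0)) := by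
    intro i
    exact (summable_ite hp0 hp1 (fun t => t.LIS = i)).mul_left _
  have hsum : Summable (fun t : STree => h t.LIS * t.weight p) := by
    rw [funext hpt]
    exact summable_sum (fun i _ => hsummand i)
  refine ⟨hsum, ?_⟩
  calc ∑' t : STree, h t.LIS * t.weight p
      = ∑' t : STree, ∑ i ∈ S, h i * (if t.LIS = i then t.weight p else 0) :=
        tsum_congr hpt
    _ = ∑ i ∈ S, ∑' t : STree, h i * (if t.LIS = i then t.weight p else 0) :=
        Summable.tsum_finsetSum (fun i _ => hsummand i)
    _ = ∑ i ∈ S, h i * qLIS p i := by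
        refine Finset.sum_congr rfl fun i _ => ?_
        rw [tsum_mul_left, ← qLIS_eq_tsum_ite i]

lemma tsum_prod_mul {f g : STree → ℝ} (hf : Summable f) (hg : Summable g)
    (hf0 : ∀ t, 0 ≤ f t) (hg0 : ∀ t, 0 ≤ g t) :
    ∑' y : STree × STree, f y.1 * g y.2 = (∑' t, f t) * (∑' t, g t) := by
  have hs : Summable (fun y : STree × STree => f y.1 * g y.2) :=
    hf.mul_of_nonneg hg hf0 hg0
  rw [Summable.tsum_prod hs]
  calc ∑' l, ∑' r, f l * g r = ∑' l, f l * ∑' r, g r :=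
        tsum_congr fun l => tsum_mul_left
    _ = _ := tsum_mul_right

lemma sym_sum (k : ℕ) (hk : 2 ≤ k) :
    ∑ i ∈ Finset.Icc 1 (k-1), qLIS p (k-i) * qLIS p i
      = 2 * ∑ i ∈ Finset.Icc 1 ((k-1)/2), qLIS p i * qLIS p (k-i)
        + (if Even k then qLIS p (k/2) * qLIS p (k/2) else 0) := by
  set m := (k-1)/2 with hm
  have hsplit : Finset.Icc 1 (k-1) = Finset.Icc 1 m ∪ Finset.Icc (m+1) (k-1) := by
    ext i; simp only [Finset.mem_Icc, Finset.mem_union]; omega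
  have hdisj : Disjoint (Finset.Icc 1 m) (Finset.Icc (m+1) (k-1)) := by
    simp only [Finset.disjoint_left, Finset.mem_Icc]; omega
  rw [hsplit, Finset.sum_union hdisj]
  have hfirst : ∑ i ∈ Finset.Icc 1 m, qLIS p (k-i) * qLIS p i
      = ∑ i ∈ Finset.Icc 1 m, qLIS p i * qLIS p (k-i) :=
    Finset.sum_congr rfl fun i _ => mul_comm _ _
  have hrefl : ∑ i ∈ Finset.Icc (m+1) (k-1), qLIS p (k-i) * qLIS p i
      = ∑ i ∈ Finset.Icc 1 (k-1-m), qLIS p i * qLIS p (k-i) := by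
    refine Finset.sum_nbij' (fun i => k - i) (fun i => k - i) ?_ ?_ ?_ ?_ ?_
    · intro a ha; simp only [Finset.mem_Icc] at ha ⊢; omega
    · intro a ha; simp only [Finset.mem_Icc] at ha ⊢; omega
    · intro a ha; simp only [Finset.mem_Icc] at ha; show k - (k - a) = a; omega
    · intro a ha; simp only [Finset.mem_Icc] at ha; show k - (k - a) = a; omega
    · intro a ha
      simp only [Finset.mem_Icc] at ha
      have : k - (k - a) = a := by omega
      rw [this]
  rw [hfirst, hrefl]
  by_cases he : Even k
  · obtain ⟨c, hc⟩ := he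
    have h1 : k - 1 - m = m + 1 := by omega
    rw [h1, Finset.sum_Icc_succ_top (by omega : 1 ≤ m + 1)]
    have h2 : m + 1 = k / 2 := by omega
    have h3 : k - (m + 1) = k / 2 := by omega
    rw [if_pos ⟨c, hc⟩, h3, h2]
    ring
  · obtain ⟨c, hc⟩ := Nat.not_even_iff_odd.mp he
    have h1 : k - 1 - m = m := by omega
    rw [h1, if_neg he]
    ring

end QAux

theorem qLIS_recursion (p : ℝ) (hp : p ∈ Set.Ioo (0 : ℝ) 1) (k : ℕ) (hk : 2 ≤ k) :
    qLIS p k =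
      (1 - p) * qLIS p k * ∑ i ∈ Finset.Icc 1 (k - 1), qLIS p i
      + p * ∑ i ∈ Finset.Icc 1 ((k - 1) / 2), qLIS p i * qLIS p (k - i)
      + ((1 - p) / 2) * (qLIS p k) ^ 2
      + (if Even k then (p / 2) * (qLIS p (k / 2)) ^ 2 else 0) := by
  classical
  obtain ⟨hp0', hp1'⟩ := hp
  have hp0 : 0 ≤ p := hp0'.le
  have hp1 : p ≤ 1 := hp1'.le
  have h1p : (0:ℝ) ≤ 1 - p := by linarith
  have hW0 : ∀ t, 0 ≤ STree.weight p t := QAux.weight_nonneg hp0 hp1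
  set f : STree → ℝ := fun t => if t.LIS = k then STree.weight p t else 0 with hf
  have hfs : Summable f := QAux.summable_ite hp0 hp1 _
  have hf0 : ∀ t, 0 ≤ f t := fun t => by
    simp only [hf]; split
    · exact hW0 t
    · exact le_rfl
  have hq : qLIS p k = ∑' t, f t := QAux.qLIS_eq_tsum_ite k
  set N : Bool × STree × STree → STree := fun x => STree.node x.1 x.2.1 x.2.2 with hN
  have hNinj : Function.Injective N := by
    rintro ⟨a, b, c⟩ ⟨a', b', c'⟩ hab
    simp only [hN, STree.node.injEq] at hab
    simp [hab.1, hab.2.1, hab.2.2]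
  have hrange : Function.support f ⊆ Set.range N := by
    intro t htf
    cases t with
    | leaf =>
      exfalso
      apply htf
      have hl : STree.LIS .leaf = 1 := rfl
      simp only [hf, hl]
      rw [if_neg (by omega)]
    | node s l r => exact ⟨(s, l, r), rfl⟩
  have hfNs : Summable (fun x : Bool × STree × STree => f (N x)) :=
    hfs.comp_injective hNinj
  have h3 : ∑' t, f t
      = ∑' y : STree × STree, f (N (false, y)) + ∑' y : STree × STree, f (N (true, y)) := by
    rw [← hNinj.tsum_eq hrange, Summable.tsum_prod hfNs, tsum_bool]
  have hsumm_b : ∀ b : Bool, Summable (fun y : STree × STree => f (N (b, y))) := fun b =>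
    hfNs.comp_injective (fun a a' h => by simpa using h)
  -- the positive-root part
  have hinner : ∀ l : STree, (∑' r : STree, f (N (true, (l, r))))
      = (if 1 ≤ l.LIS ∧ l.LIS < k then (1/2) * p * qLIS p (k - l.LIS) else 0)
          * STree.weight p l := by
    intro l
    by_cases hlk : l.LIS < k
    · have hpt : ∀ r : STree, f (N (true, (l, r)))
          = ((1/2) * p * STree.weight p l) * (if r.LIS = k - l.LIS then STree.weight p r else 0) := by
        intro r
        have h1 := QAux.one_le_LIS r
        have hls : (STree.node true l r).LIS = l.LIS + r.LIS := rfl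
        have hwt : STree.weight p (STree.node true l r)
            = (1/2) * p * STree.weight p l * STree.weight p r := by
          simp [STree.weight]
        simp only [hf, hN, hls]
        by_cases hr : r.LIS = k - l.LIS
        · rw [if_pos (by omega), if_pos hr, hwt]
        · rw [if_neg (by omega), if_neg hr, mul_zero]
      rw [tsum_congr hpt, tsum_mul_left, ← QAux.qLIS_eq_tsum_ite (k - l.LIS)]
      rw [if_pos ⟨QAux.one_le_LIS l, hlk⟩]
      ring
    · have hpt : ∀ r : STree, f (N (true, (l, r))) = 0 := by
        intro r
        have h1 := QAux.one_le_LIS r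
        have hls : (STree.node true l r).LIS = l.LIS + r.LIS := rfl
        simp only [hf, hN, hls]
        rw [if_neg (by omega)]
      rw [tsum_congr hpt, tsum_zero, if_neg (by omega), zero_mul]
  have hAtrue : ∑' y : STree × STree, f (N (true, y))
      = ∑ i ∈ Finset.Icc 1 (k-1),
          (if 1 ≤ i ∧ i < k then (1/2) * p * qLIS p (k - i) else 0) * qLIS p i := by
    rw [Summable.tsum_prod (hsumm_b true), tsum_congr hinner]
    exact (QAux.key hp0 hp1
      (fun i => if 1 ≤ i ∧ i < k then (1/2) * p * qLIS p (k - i) else 0)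
      (Finset.Icc 1 (k-1)) (fun i hi => by
        simp only [Finset.mem_Icc] at hi; exact if_neg (by omega))).2
  have hAtrue' : ∑' y : STree × STree, f (N (true, y))
      = (1/2) * p * ∑ i ∈ Finset.Icc 1 (k-1), qLIS p (k-i) * qLIS p i := by
    rw [hAtrue, Finset.mul_sum]
    refine Finset.sum_congr rfl fun i hi => ?_
    simp only [Finset.mem_Icc] at hi
    rw [if_pos (by omega)]
    ring
  -- the negative-root part
  set F2 : STree → ℝ := fun t => if t.LIS < k then STree.weight p t else 0 with hF2
  have hF2s : Summable F2 := QAux.summable_ite hp0 hp1 _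
  have hF20 : ∀ t, 0 ≤ F2 t := fun t => by
    simp only [hF2]; split
    · exact hW0 t
    · exact le_rfl
  set Q : ℝ := ∑ i ∈ Finset.Icc 1 (k-1), qLIS p i with hQ
  have hQval : ∑' t, F2 t = Q := by
    have hpt : ∀ t : STree, F2 t
        = (if 1 ≤ t.LIS ∧ t.LIS < k then (1:ℝ) else 0) * STree.weight p t := by
      intro t
      have h1 := QAux.one_le_LIS t
      simp only [hF2]
      by_cases hlt : t.LIS < k
      · rw [if_pos hlt, if_pos ⟨h1, hlt⟩, one_mul]
      · rw [if_neg hlt, if_neg (by omega), zero_mul]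
    rw [tsum_congr hpt]
    rw [(QAux.key hp0 hp1 (fun i => if 1 ≤ i ∧ i < k then (1:ℝ) else 0)
      (Finset.Icc 1 (k-1)) (fun i hi => by
        simp only [Finset.mem_Icc] at hi; exact if_neg (by omega))).2]
    refine Finset.sum_congr rfl fun i hi => ?_
    simp only [Finset.mem_Icc] at hi
    rw [if_pos (by omega), one_mul]
  have hsplit3 : ∀ y : STree × STree, f (N (false, y)) =
      (((1/2) * (1-p)) * f y.1) * (F2 y.2) + (((1/2) * (1-p)) * F2 y.1) * (f y.2)
        + (((1/2) * (1-p)) * f y.1) * (f y.2) := by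
    rintro ⟨l, r⟩
    have hls : (STree.node false l r).LIS = max l.LIS r.LIS := rfl
    have hwt : STree.weight p (STree.node false l r)
        = (1/2) * (1-p) * STree.weight p l * STree.weight p r := by
      simp [STree.weight]
    simp only [hf, hF2, hN, hls, hwt]
    rcases le_total l.LIS r.LIS with hmax | hmax
    · rw [max_eq_right hmax]
      split_ifs <;> first | (exfalso; omega) | ring
    · rw [max_eq_left hmax]
      split_ifs <;> first | (exfalso; omega) | ring
  have hcf : Summable (fun t => ((1/2) * (1-p)) * f t) := hfs.mul_left _
  have hcF2 : Summable (fun t => ((1/2) * (1-p)) * F2 t) := hF2s.mul_left _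
  have hcf0 : ∀ t, 0 ≤ ((1/2) * (1-p)) * f t := fun t =>
    mul_nonneg (by linarith) (hf0 t)
  have hcF20 : ∀ t, 0 ≤ ((1/2) * (1-p)) * F2 t := fun t =>
    mul_nonneg (by linarith) (hF20 t)
  have e1 : Summable (fun y : STree × STree => (((1/2) * (1-p)) * f y.1) * (F2 y.2)) :=
    hcf.mul_of_nonneg hF2s hcf0 hF20
  have e2 : Summable (fun y : STree × STree => (((1/2) * (1-p)) * F2 y.1) * (f y.2)) :=
    hcF2.mul_of_nonneg hfs hcF20 hf0
  have e3 : Summable (fun y : STree × STree => (((1/2) * (1-p)) * f y.1) * (f y.2)) :=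
    hcf.mul_of_nonneg hfs hcf0 hf0
  have hAfalse : ∑' y : STree × STree, f (N (false, y))
      = ((1/2) * (1-p) * qLIS p k) * Q + ((1/2) * (1-p) * Q) * qLIS p k
        + ((1/2) * (1-p) * qLIS p k) * qLIS p k := by
    rw [tsum_congr hsplit3, Summable.tsum_add (e1.add e2) e3, Summable.tsum_add e1 e2]
    rw [QAux.tsum_prod_mul hcf hF2s hcf0 hF20,
        QAux.tsum_prod_mul hcF2 hfs hcF20 hf0,
        QAux.tsum_prod_mul hcf hfs hcf0 hf0]
    rw [tsum_mul_left, tsum_mul_left, hQval, ← hq]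
  calc qLIS p k = ∑' t, f t := hq
    _ = ∑' y : STree × STree, f (N (false, y)) + ∑' y : STree × STree, f (N (true, y)) := h3
    _ = (((1/2) * (1-p) * qLIS p k) * Q + ((1/2) * (1-p) * Q) * qLIS p k
          + ((1/2) * (1-p) * qLIS p k) * qLIS p k)
        + (1/2) * p * (2 * ∑ i ∈ Finset.Icc 1 ((k-1)/2), qLIS p i * qLIS p (k-i)
            + (if Even k then qLIS p (k/2) * qLIS p (k/2) else 0)) := by
        rw [hAfalse, hAtrue', QAux.sym_sum k hk]
    _ = _ := by
        by_cases he : Even k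
        · rw [if_pos he, if_pos he]; ring
        · rw [if_neg he, if_neg he]; ring
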